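/- Let Q : ℝ → Matrix 3 3 ℝ be differentiable with Q(t) ∈ SO(3) for all t (i.e. Q(t)ᵀ·Q(t) = 1 and det Q(t) = 1), and let Ω be a fixed real 3×3 skew-symmetric matrix. Let ν : ℝ → ℝ³ be the curve determined by hat(ν(t)) = Q(t)ᵀ · Ω · Q(t) (well-defined since Q(t)ᵀΩQ(t) is skew-symmetric), and at a point t₀ let ω ∈ ℝ³ be the vector with hat(ω) = Q(t₀)ᵀ · Q′(t₀) (well-defined since Q(t₀)ᵀQ′(t₀) is skew-symmetric). Then ν is differentiable at t₀ and ν′(t₀) = ν(t₀) ×₃ ω. -/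

import Mathlib

open Matrix

attribute [local instance] Matrix.normedAddCommGroup Matrix.normedSpace

/-- The standard isomorphism `hat : ℝ³ → so(3)`, with `(hat ω)·x = ω ×₃ x`. -/
def hat (ω : Fin 3 → ℝ) : Matrix (Fin 3) (Fin 3) ℝ :=
  !![0, -ω 2, ω 1; ω 2, 0, -ω 0; -ω 1, ω 0, 0]

/-- Commutator identity: `[hat a, hat b] = hat (a ×₃ b)`. -/
lemma hat_comm (a b : Fin 3 → ℝ) :
    hat a * hat b - hat b * hat a = hat (crossProduct a b) := by
  ext i j
  fin_cases i <;> fin_cases j <;>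
    simp [hat, crossProduct, Matrix.mul_apply, Fin.sum_univ_three] <;> ring

/-- `hat a` is skew-symmetric. -/
lemma hat_transpose (a : Fin 3 → ℝ) : (hat a)ᵀ = -hat a := by
  ext i j; fin_cases i <;> fin_cases j <;> simp [hat]

/-- Tatarinov's lemma: for a differentiable curve `Q(t) ∈ SO(3)` and a fixed
skew-symmetric `Ω`, the Poisson vector `ν(t)` defined by `hat ν(t) = Q(t)ᵀ·Ω·Q(t)`
satisfies `ν′(t₀) = ν(t₀) ×₃ ω`, where `ω` is the spin, `hat ω = Q(t₀)ᵀ·Q′(t₀)`. -/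
theorem tangent_map_poisson {Q : ℝ → Matrix (Fin 3) (Fin 3) ℝ}
    {Q' : ℝ → Matrix (Fin 3) (Fin 3) ℝ}
    (hQ : ∀ t, HasDerivAt Q (Q' t) t)
    (hSO : ∀ t, (Q t)ᵀ * Q t = 1 ∧ (Q t).det = 1)
    {Ω : Matrix (Fin 3) (Fin 3) ℝ} (hΩ : Ωᵀ = -Ω)
    (ν : ℝ → Fin 3 → ℝ)
    (hν : ∀ t, hat (ν t) = (Q t)ᵀ * Ω * Q t)
    (t₀ : ℝ) (ω : Fin 3 → ℝ)
    (hω : hat ω = (Q t₀)ᵀ * Q' t₀) :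
    HasDerivAt ν (crossProduct (ν t₀) ω) t₀ := by
  -- entrywise derivatives of Q
  have hQe : ∀ i j, HasDerivAt (fun t => Q t i j) (Q' t₀ i j) t₀ := by
    intro i j
    exact hasDerivAt_pi.1 (hasDerivAt_pi.1 (hQ t₀) i) j
  -- Q is orthogonal both ways
  have hQQt : Q t₀ * (Q t₀)ᵀ = 1 := mul_eq_one_comm.1 (hSO t₀).1
  -- Q' t₀ = Q t₀ * hat ω
  have hQ' : Q' t₀ = Q t₀ * hat ω := by
    rw [hω, ← Matrix.mul_assoc, hQQt, Matrix.one_mul]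
  -- derivative of the matrix curve M = QᵀΩQ
  set M' : Matrix (Fin 3) (Fin 3) ℝ :=
    (Q' t₀)ᵀ * Ω * Q t₀ + (Q t₀)ᵀ * Ω * Q' t₀ with hM'def
  have hEntry : ∀ i j,
      HasDerivAt (fun t => ((Q t)ᵀ * Ω * Q t) i j) (M' i j) t₀ := by
    intro i j
    have h : HasDerivAt
        (fun t => ∑ k, (∑ l, Q t l i * Ω l k) * Q t k j)
        (∑ k, ((∑ l, Q' t₀ l i * Ω l k) * Q t₀ k j
          + (∑ l, Q t₀ l i * Ω l k) * Q' t₀ k j)) t₀ := by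
      refine HasDerivAt.fun_sum fun k _ => ?_
      exact (HasDerivAt.fun_sum fun l _ => (hQe l i).mul_const (Ω l k)).mul (hQe k j)
    convert h using 2
    all_goals simp [hM'def, Matrix.mul_apply, Matrix.transpose_apply, Matrix.add_apply,
        Finset.sum_add_distrib]
  -- M' = hat (ν t₀ ×₃ ω)
  have hM' : M' = hat (crossProduct (ν t₀) ω) := by
    rw [← hat_comm]
    have h1 : (Q' t₀)ᵀ * Ω * Q t₀ = -(hat ω * hat (ν t₀)) := by
      rw [hQ', Matrix.transpose_mul, hat_transpose]
      have : -hat ω * (Q t₀)ᵀ * Ω * Q t₀ = -(hat ω * ((Q t₀)ᵀ * Ω * Q t₀)) := by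
        noncomm_ring
      rw [this, hν t₀]
    have h2 : (Q t₀)ᵀ * Ω * Q' t₀ = hat (ν t₀) * hat ω := by
      rw [hQ', ← Matrix.mul_assoc, hν t₀]
    rw [hM'def, h1, h2, neg_add_eq_sub]
  -- assemble componentwise
  rw [hasDerivAt_pi]
  intro i
  have key : ∀ a b : Fin 3, (∀ t, ν t i = ((Q t)ᵀ * Ω * Q t) a b) →
      hat (crossProduct (ν t₀) ω) a b = crossProduct (ν t₀) ω i →
      HasDerivAt (fun t => ν t i) (crossProduct (ν t₀) ω i) t₀ := by
    intro a b h1 h2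
    have := hEntry a b
    rw [hM', h2] at this
    exact this.congr_of_eventuallyEq (Filter.Eventually.of_forall fun t => h1 t)
  fin_cases i
  · exact key 2 1 (fun t => by rw [← hν t]; simp [hat]) (by simp [hat])
  · exact key 0 2 (fun t => by rw [← hν t]; simp [hat]) (by simp [hat])
  · exact key 1 0 (fun t => by rw [← hν t]; simp [hat]) (by simp [hat])
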